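/- Fix d ≥ 1, n ≥ 1, and 0 < r < 1. Suppose x₁,…,xₙ ∈ ℝ^d form a configuration of n disjoint balls of radius r in the closed unit ball (‖xᵢ‖ ≤ 1 − r for all i, and ‖xᵢ − xⱼ‖ ≥ 2r for i ≠ j), and suppose this configuration admits a connected balanced stress graph. Then r ≥ 1/n. -/

import Mathlib

open Finset
open scoped RealInnerProductSpace

lemma touch_eq_aux {E : Type*} [NormedAddCommGroup E] [InnerProductSpace ℝ E]
    {r : ℝ} (hr0 : 0 < r) (hr1 : r < 1) {x y : E} (hy : ‖y‖ = 1)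
    (hxy : ‖x - y‖ = r) (hx : ‖x‖ ≤ 1 - r) : x = (1 - r) • y := by
  have h2 : ‖x - y‖ ^ 2 = ‖x‖ ^ 2 - 2 * (inner ℝ x y : ℝ) + ‖y‖ ^ 2 := norm_sub_sq_real x y
  have h1 : (inner ℝ x y : ℝ) ≤ ‖x‖ := by
    have := real_inner_le_norm x y
    rwa [hy, mul_one] at this
  have hxn : ‖x‖ = 1 - r := by nlinarith [norm_nonneg x]
  have hin : (inner ℝ x y : ℝ) = 1 - r := by nlinarith
  have hz : ‖x - (1 - r) • y‖ ^ 2 = 0 := by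
    rw [norm_sub_sq_real, real_inner_smul_right, norm_smul, Real.norm_eq_abs,
      abs_of_pos (by linarith : (0:ℝ) < 1 - r), hy, hxn, hin]
    ring
  have h0 := pow_eq_zero_iff (n := 2) (by norm_num) |>.mp hz
  rw [norm_eq_zero, sub_eq_zero] at h0
  exact h0

lemma sum_dist_le_aux {V : Type*} [Fintype V] [DecidableEq V] (G : SimpleGraph V)
    (R : Finset V) (u : V) (hu : u ∈ R) (hR : ∀ v, v ∈ R ↔ G.Reachable u v) :
    2 * ∑ v ∈ R, G.dist u v ≤ R.card * (R.card - 1) := by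
  classical
  set m := R.card with hm
  have hm1 : 1 ≤ m := Finset.card_pos.mpr ⟨u, hu⟩
  set A : ℕ → Finset V := fun t => R.filter (fun v => G.dist u v ≤ t) with hA
  have hAsub : ∀ t, A t ⊆ R := fun t => filter_subset _ _
  have hmono : ∀ t, A t ⊆ A (t + 1) := by
    intro t v hv
    simp only [hA, mem_filter] at hv ⊢
    exact ⟨hv.1, hv.2.trans (Nat.le_succ t)⟩
  have hgrow : ∀ t, A t ≠ R → ∃ v, v ∈ A (t + 1) ∧ v ∉ A t := by
    intro t hne
    obtain ⟨w, hwR, hwA⟩ : ∃ w, w ∈ R ∧ w ∉ A t := by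
      by_contra hcon
      push_neg at hcon
      exact hne (Finset.Subset.antisymm (hAsub t) (fun w hw => hcon w hw))
    have hwreach : Relation.ReflTransGen G.Adj u w :=
      (SimpleGraph.reachable_iff_reflTransGen u w).mp ((hR w).mp hwR)
    have key : ∀ z, Relation.ReflTransGen G.Adj u z →
        (z ∈ A t ∨ ∃ v, v ∈ A (t + 1) ∧ v ∉ A t) := by
      intro z hz
      induction hz with
      | refl =>
        left
        simp only [hA, mem_filter]
        exact ⟨hu, by simp [SimpleGraph.dist_self]⟩
      | tail hab hbc ih =>
        rcases ih with hb | hdone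
        · rename_i zb zc
          have hbR : zb ∈ R := (hAsub t) hb
          have hbd : G.dist u zb ≤ t :=
            (by simpa only [hA, mem_filter] using hb : zb ∈ R ∧ G.dist u zb ≤ t).2
          have hreachb : G.Reachable u zb := (hR zb).mp hbR
          obtain ⟨p, hp⟩ := hreachb.exists_walk_length_eq_dist
          have hdc : G.dist u zc ≤ t + 1 := by
            have hle := SimpleGraph.dist_le (p.concat hbc)
            rw [SimpleGraph.Walk.length_concat, hp] at hle
            omega
          have hcR : zc ∈ R := (hR zc).mpr (hreachb.trans hbc.reachable)
          by_cases hcA : zc ∈ A t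
          · exact Or.inl hcA
          · exact Or.inr ⟨zc, by simp only [hA, mem_filter]; exact ⟨hcR, hdc⟩, hcA⟩
        · exact Or.inr hdone
    rcases key w hwreach with h | h
    · exact absurd h hwA
    · exact h
  have hcard : ∀ t, min (t + 1) m ≤ (A t).card := by
    intro t
    induction t with
    | zero =>
      have hu0 : u ∈ A 0 := by
        simp only [hA, mem_filter]
        exact ⟨hu, by simp [SimpleGraph.dist_self]⟩
      have := Finset.card_pos.mpr ⟨u, hu0⟩
      omega
    | succ t ih =>
      by_cases he : A t = R
      · have h1 : (A (t+1)).card ≥ (A t).card := Finset.card_le_card (hmono t)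
        rw [he] at h1
        omega
      · obtain ⟨v, hv1, hv2⟩ := hgrow t he
        have hss : A t ⊂ A (t + 1) := Finset.ssubset_iff_of_subset (hmono t) |>.mpr ⟨v, hv1, hv2⟩
        have := Finset.card_lt_card hss
        omega
  have hall : ∀ v ∈ R, G.dist u v ≤ m - 1 := by
    intro v hv
    have h1 : min ((m - 1) + 1) m ≤ (A (m - 1)).card := hcard (m - 1)
    have h2 : (A (m - 1)).card ≤ m := Finset.card_le_card (hAsub _)
    have h3 : A (m - 1) = R :=
      Finset.eq_of_subset_of_card_le (hAsub _) (by omega)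
    have : v ∈ A (m - 1) := h3.symm ▸ hv
    exact (by simpa only [hA, mem_filter] using this : v ∈ R ∧ G.dist u v ≤ m - 1).2
  -- layer cake
  have hfilter : ∀ v ∈ R, G.dist u v
      = ∑ t ∈ Finset.range (m - 1), (if t < G.dist u v then 1 else 0) := by
    intro v hv
    have h1 : ((Finset.range (m - 1)).filter (fun t => t < G.dist u v)) =
        Finset.range (G.dist u v) := by
      ext t
      simp only [mem_filter, mem_range]
      have := hall v hv
      omega
    calc G.dist u v = ((Finset.range (m-1)).filter (fun t => t < G.dist u v)).card := by
          rw [h1, Finset.card_range]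
      _ = ∑ t ∈ Finset.range (m - 1), (if t < G.dist u v then 1 else 0) :=
          Finset.card_filter _ _
  have hsum : ∑ v ∈ R, G.dist u v
      = ∑ t ∈ Finset.range (m - 1), (R.filter (fun v => t < G.dist u v)).card := by
    rw [Finset.sum_congr rfl hfilter, Finset.sum_comm]
    exact Finset.sum_congr rfl fun t _ => (Finset.card_filter _ _).symm
  have hbound : ∀ t ∈ Finset.range (m - 1),
      (R.filter (fun v => t < G.dist u v)).card ≤ (m - 1) - t := by
    intro t ht
    rw [mem_range] at ht
    have hpart := Finset.card_filter_add_card_filter_not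
      (s := R) (p := fun v => G.dist u v ≤ t)
    have hmin := hcard t
    have : (R.filter (fun v => ¬ G.dist u v ≤ t)).card
        = (R.filter (fun v => t < G.dist u v)).card := by
      congr 1
      apply Finset.filter_congr
      intro v _
      constructor
      · omega
      · omega
    have e1 : (A t).card = (R.filter (fun v => G.dist u v ≤ t)).card := rfl
    omega
  obtain ⟨a, ha⟩ : ∃ a, m = a + 1 := ⟨m - 1, by omega⟩
  have hrefl : ∑ t ∈ Finset.range (m - 1), ((m - 1) - t)
      = ∑ t ∈ Finset.range (m - 1), (t + 1) := by
    rw [← Finset.sum_range_reflect (fun j => j + 1) (m - 1)]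
    apply Finset.sum_congr rfl
    intro t ht
    rw [mem_range] at ht
    omega
  have hgauss := Finset.sum_range_id_mul_two (m - 1)
  calc 2 * ∑ v ∈ R, G.dist u v
      = 2 * ∑ t ∈ Finset.range (m - 1), (R.filter (fun v => t < G.dist u v)).card := by
        rw [hsum]
    _ ≤ 2 * ∑ t ∈ Finset.range (m - 1), ((m - 1) - t) :=
        Nat.mul_le_mul_left 2 (Finset.sum_le_sum hbound)
    _ = 2 * ∑ t ∈ Finset.range (m - 1), (t + 1) := by rw [hrefl]
    _ = (∑ t ∈ Finset.range (m - 1), t) * 2 + 2 * (m - 1) := by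
        rw [Finset.sum_add_distrib, Finset.sum_const, Finset.card_range]
        ring
    _ = (m - 1) * ((m - 1) - 1) + 2 * (m - 1) := by rw [hgauss]
    _ ≤ m * (m - 1) := by
        rw [ha]
        simp only [Nat.add_sub_cancel]
        rcases a with _ | p
        · simp
        · simp only [Nat.add_sub_cancel]
          nlinarith




/-- A balanced stress graph for a configuration `x` of `n` disjoint balls of radius `r`
in the closed unit ball of `ℝ^d`.  Internal edges are the unordered pairs `{i, j}` where
the symmetric weight function `w` is positive; boundary edges are the pairs `(i, y)` with
`y` a boundary point (a point of the unit sphere in the finite set `Y`) where the weight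
function `b` is positive. -/
structure BalancedStressGraph (d n : ℕ) (r : ℝ)
    (x : Fin n → EuclideanSpace ℝ (Fin d)) where
  /-- the boundary points, lying on the unit sphere -/
  Y : Finset (EuclideanSpace ℝ (Fin d))
  /-- weights of the internal edges (an edge is present iff its weight is positive) -/
  w : Fin n → Fin n → ℝ
  /-- weights of the boundary edges (an edge is present iff its weight is positive) -/
  b : Fin n → EuclideanSpace ℝ (Fin d) → ℝ
  hY : ∀ y ∈ Y, ‖y‖ = 1
  w_symm : ∀ i j, w i j = w j i
  w_nonneg : ∀ i j, 0 ≤ w i j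
  /-- internal edges join distinct centers at distance exactly 2r -/
  w_edge : ∀ i j, 0 < w i j → i ≠ j ∧ ‖x i - x j‖ = 2 * r
  b_nonneg : ∀ i y, 0 ≤ b i y
  /-- boundary edges join a center to a boundary point at distance exactly r -/
  b_edge : ∀ i y, 0 < b i y → y ∈ Y ∧ ‖x i - y‖ = r
  /-- every boundary point lies on some boundary edge -/
  Y_covered : ∀ y ∈ Y, ∃ i, 0 < b i y
  /-- the edge set is nonempty -/
  edges_nonempty : (∃ i j, 0 < w i j) ∨ (∃ i y, 0 < b i y)
  /-- the outward-pushing mechanical stresses at each center sum to zero -/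
  balance_int : ∀ i, (∑ j, (w i j / ‖x i - x j‖) • (x i - x j))
      + (∑ y ∈ Y, (b i y / ‖x i - y‖) • (x i - y)) = 0
  /-- the mechanical stresses on the boundary points sum to zero -/
  balance_bd : (∑ i, ∑ y ∈ Y, (b i y / ‖y - x i‖) • (y - x i)) = 0

/-- The adjacency relation of the stress graph, on the disjoint union of the index set of
centers and the space of possible boundary points. -/
def BalancedStressGraph.Adj {d n : ℕ} {r : ℝ} {x : Fin n → EuclideanSpace ℝ (Fin d)}
    (S : BalancedStressGraph d n r x) :
    (Fin n ⊕ EuclideanSpace ℝ (Fin d)) → (Fin n ⊕ EuclideanSpace ℝ (Fin d)) → Prop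
  | Sum.inl i, Sum.inl j => 0 < S.w i j
  | Sum.inl i, Sum.inr y => 0 < S.b i y
  | Sum.inr y, Sum.inl i => 0 < S.b i y
  | Sum.inr _, Sum.inr _ => False

/-- A vertex of the stress graph: a center or boundary point incident to at least one
edge. -/
def BalancedStressGraph.IsVertex {d n : ℕ} {r : ℝ} {x : Fin n → EuclideanSpace ℝ (Fin d)}
    (S : BalancedStressGraph d n r x) (u : Fin n ⊕ EuclideanSpace ℝ (Fin d)) : Prop :=
  ∃ u', S.Adj u u'

/-- The stress graph is connected: any two of its vertices are joined by a path. -/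
def BalancedStressGraph.Connected {d n : ℕ} {r : ℝ}
    {x : Fin n → EuclideanSpace ℝ (Fin d)} (S : BalancedStressGraph d n r x) : Prop :=
  ∀ u v, S.IsVertex u → S.IsVertex v → Relation.ReflTransGen S.Adj u v

/-- If a configuration of `n` disjoint balls of radius `r` in the closed unit ball of
`ℝ^d` admits a connected balanced stress graph, then `r ≥ 1/n`. -/

theorem radius_ge_inv_n_of_balanced (d n : ℕ) (hd : 1 ≤ d) (hn : 1 ≤ n)
    (r : ℝ) (hr0 : 0 < r) (hr1 : r < 1)
    (x : Fin n → EuclideanSpace ℝ (Fin d))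
    (hx : ∀ i, ‖x i‖ ≤ 1 - r)
    (hsep : ∀ i j, i ≠ j → 2 * r ≤ ‖x i - x j‖)
    (S : BalancedStressGraph d n r x) (hS : S.Connected) :
    1 / (n : ℝ) ≤ r := by
  classical
  have hxinj : ∀ i j, x i = x j → i = j := by
    intro i j hij
    by_contra hne
    have h := hsep i j hne
    rw [hij, sub_self, norm_zero] at h
    linarith
  have hA : ∀ i y, 0 < S.b i y → x i = (1 - r) • y := by
    intro i y hb
    obtain ⟨hyY, hdist⟩ := S.b_edge i y hb
    exact touch_eq_aux hr0 hr1 (S.hY y hyY) hdist (hx i)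
  -- Y is nonempty
  have hYne : S.Y.Nonempty := by
    by_contra hYe
    rw [Finset.not_nonempty_iff_eq_empty] at hYe
    obtain ⟨i0, j0, hw⟩ : ∃ i j, 0 < S.w i j := by
      rcases S.edges_nonempty with h | ⟨i, y, hb⟩
      · exact h
      · have h := (S.b_edge i y hb).1
        rw [hYe] at h
        exact absurd h (Finset.notMem_empty y)
    have hbal : ∀ i, (∑ j, (S.w i j / ‖x i - x j‖) • (x i - x j))
        = (0 : EuclideanSpace ℝ (Fin d)) := by
      intro i
      have h := S.balance_int i
      rw [hYe] at h
      simpa using h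
    have hf : ∀ i, ∑ j, (S.w i j / ‖x i - x j‖) * (inner ℝ (x i - x j) (x i) : ℝ) = 0 := by
      intro i
      have h := congrArg (fun v : EuclideanSpace ℝ (Fin d) => (inner ℝ v (x i) : ℝ)) (hbal i)
      simp only [sum_inner, real_inner_smul_left, inner_zero_left] at h
      exact h
    have hpair : ∀ i j, (S.w i j / ‖x i - x j‖) * (inner ℝ (x i - x j) (x i) : ℝ)
        + (S.w j i / ‖x j - x i‖) * (inner ℝ (x j - x i) (x j) : ℝ)
        = S.w i j * ‖x i - x j‖ := by
      intro i j
      by_cases hij : x i = x j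
      · simp [hij]
      · have hnz : ‖x i - x j‖ ≠ 0 := by
          simpa [sub_eq_zero] using hij
        rw [← S.w_symm i j, norm_sub_rev (x j) (x i)]
        have hneg : (inner ℝ (x j - x i) (x j) : ℝ) = - (inner ℝ (x i - x j) (x j) : ℝ) := by
          rw [← inner_neg_left, neg_sub]
        rw [hneg]
        have hinner : (inner ℝ (x i - x j) (x i) : ℝ) - (inner ℝ (x i - x j) (x j) : ℝ)
            = ‖x i - x j‖ ^ 2 := by
          rw [← inner_sub_right, real_inner_self_eq_norm_sq]
        have e1 : (S.w i j / ‖x i - x j‖) * (inner ℝ (x i - x j) (x i) : ℝ)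
            + (S.w i j / ‖x i - x j‖) * (- (inner ℝ (x i - x j) (x j) : ℝ))
            = (S.w i j / ‖x i - x j‖) * (‖x i - x j‖ ^ 2) := by
          rw [← hinner]; ring
        rw [e1]
        field_simp
    have hzero : (0 : ℝ) = ∑ i, ∑ j, S.w i j * ‖x i - x j‖ := by
      have h1 : (0 : ℝ) = ∑ i, ∑ j,
          (S.w i j / ‖x i - x j‖) * (inner ℝ (x i - x j) (x i) : ℝ) := by
        rw [Finset.sum_congr rfl (fun i _ => hf i)]
        simp
      have h2 : (0 : ℝ) = ∑ i, ∑ j,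
          (S.w j i / ‖x j - x i‖) * (inner ℝ (x j - x i) (x j) : ℝ) := by
        rw [Finset.sum_comm]
        exact h1
      calc (0 : ℝ) = (∑ i, ∑ j, (S.w i j / ‖x i - x j‖) * (inner ℝ (x i - x j) (x i) : ℝ))
            + (∑ i, ∑ j, (S.w j i / ‖x j - x i‖) * (inner ℝ (x j - x i) (x j) : ℝ)) := by
            rw [← h1, ← h2]; ring
        _ = ∑ i, ∑ j, ((S.w i j / ‖x i - x j‖) * (inner ℝ (x i - x j) (x i) : ℝ)
            + (S.w j i / ‖x j - x i‖) * (inner ℝ (x j - x i) (x j) : ℝ)) := by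
            rw [← Finset.sum_add_distrib]
            exact Finset.sum_congr rfl fun i _ => (Finset.sum_add_distrib).symm
        _ = ∑ i, ∑ j, S.w i j * ‖x i - x j‖ :=
            Finset.sum_congr rfl fun i _ => Finset.sum_congr rfl fun j _ => hpair i j
    have hpos : (0 : ℝ) < ∑ i, ∑ j, S.w i j * ‖x i - x j‖ := by
      apply Finset.sum_pos'
      · intro i _
        apply Finset.sum_nonneg
        intro j _
        exact mul_nonneg (S.w_nonneg i j) (norm_nonneg _)
      · refine ⟨i0, Finset.mem_univ _, ?_⟩
        apply Finset.sum_pos'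
        · intro j _
          exact mul_nonneg (S.w_nonneg i0 j) (norm_nonneg _)
        · refine ⟨j0, Finset.mem_univ _, ?_⟩
          have := (S.w_edge i0 j0 hw).2
          rw [this]
          positivity
    linarith [hzero, hpos]
  obtain ⟨y0, hy0Y⟩ := hYne
  obtain ⟨i0, hb0⟩ := S.Y_covered y0 hy0Y
  -- the contact graph on centers
  let G : SimpleGraph (Fin n) :=
    { Adj := fun i j => 0 < S.w i j
      symm := ⟨fun i j h => by
        have h' : 0 < S.w i j := h
        rw [S.w_symm i j] at h'
        exact h'⟩
      loopless := ⟨fun i h => (S.w_edge i i h).1 rfl⟩ }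
  -- reachability of boundary-adjacent centers from i0
  have key : ∀ z, Relation.ReflTransGen S.Adj (Sum.inl i0) z →
      (∀ j, z = Sum.inl j → G.Reachable i0 j) ∧
      (∀ y j, z = Sum.inr y → 0 < S.b j y → G.Reachable i0 j) := by
    intro z hz
    induction hz with
    | refl =>
      constructor
      · intro j hj
        rw [Sum.inl.injEq] at hj
        rw [← hj]
      · intro y j hj
        exact absurd hj (by simp)
    | tail hab hbc ih =>
      rename_i zb zc
      cases zb with
      | inl a =>
        cases zc with
        | inl c =>
          have hadj : G.Adj a c := hbc
          constructor
          · intro j hj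
            rw [Sum.inl.injEq] at hj
            rw [← hj]
            exact (ih.1 a rfl).trans hadj.reachable
          · intro y j hj
            exact absurd hj (by simp)
        | inr y =>
          have hb : 0 < S.b a y := hbc
          constructor
          · intro j hj
            exact absurd hj (by simp)
          · intro y' j hj hbj
            rw [Sum.inr.injEq] at hj
            rw [← hj] at hbj
            have hxeq : x j = x a := by rw [hA j y hbj, hA a y hb]
            rw [hxinj j a hxeq]
            exact ih.1 a rfl
      | inr y =>
        cases zc with
        | inl c =>
          have hb : 0 < S.b c y := hbc
          constructor
          · intro j hj
            rw [Sum.inl.injEq] at hj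
            rw [← hj]
            exact ih.2 y c rfl hb
          · intro y' j hj
            exact absurd hj (by simp)
        | inr y' => exact absurd hbc (by exact fun h => h)
  have hreach : ∀ i y, 0 < S.b i y → G.Reachable i0 i := by
    intro i y hb
    have hv0 : S.IsVertex (Sum.inl i0) := ⟨Sum.inr y0, hb0⟩
    have hvi : S.IsVertex (Sum.inl i) := ⟨Sum.inr y, hb⟩
    exact (key (Sum.inl i) (hS _ _ hv0 hvi)).1 i rfl
  -- the component of i0
  set R : Finset (Fin n) := Finset.univ.filter (fun j => G.Reachable i0 j) with hR
  have hi0R : i0 ∈ R := by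
    rw [hR, Finset.mem_filter]
    exact ⟨Finset.mem_univ _, SimpleGraph.Reachable.refl _⟩
  set m : ℕ := R.card with hmdef
  have hm1 : 1 ≤ m := Finset.card_pos.mpr ⟨i0, hi0R⟩
  have hmn : m ≤ n := by
    have := Finset.card_filter_le (Finset.univ : Finset (Fin n))
      (fun j => G.Reachable i0 j)
    simpa using this
  have hRiff : ∀ u, u ∈ R → ∀ v, (v ∈ R ↔ G.Reachable u v) := by
    intro u hu v
    have hu' : G.Reachable i0 u := by
      rw [hR, Finset.mem_filter] at hu
      exact hu.2
    constructor
    · intro hv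
      rw [hR, Finset.mem_filter] at hv
      exact hu'.symm.trans hv.2
    · intro h
      rw [hR, Finset.mem_filter]
      exact ⟨Finset.mem_univ _, hu'.trans h⟩
  have hdistsum : ∀ u ∈ R, 2 * ∑ v ∈ R, G.dist u v ≤ m * (m - 1) :=
    fun u hu => sum_dist_le_aux G R u hu (hRiff u hu)
  -- geometric length of walks
  have hwalklen : ∀ (a b : Fin n) (p : G.Walk a b), ‖x a - x b‖ ≤ 2 * r * (p.length : ℝ) := by
    intro a b p
    induction p with
    | nil => simp
    | cons hadj q ih =>
      rename_i u v w'
      have hedge : ‖x u - x v‖ = 2 * r := (S.w_edge u v hadj).2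
      have htri : ‖x u - x w'‖ ≤ ‖x u - x v‖ + ‖x v - x w'‖ := by
        have h := dist_triangle (x u) (x v) (x w')
        simpa [dist_eq_norm] using h
      rw [SimpleGraph.Walk.length_cons]
      push_cast
      rw [hedge] at htri
      have := ih
      nlinarith
  have hdistbound : ∀ a b : Fin n, G.Reachable a b →
      ‖x a - x b‖ ≤ 2 * r * ((G.dist a b : ℕ) : ℝ) := by
    intro a b h
    obtain ⟨p, hp⟩ := h.exists_walk_length_eq_dist
    have := hwalklen a b p
    rw [hp] at this
    exact this
  -- total boundary stress
  set B : ℝ := ∑ i, ∑ y ∈ S.Y, S.b i y with hBdef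
  have hBpos : 0 < B := by
    rw [hBdef]
    apply Finset.sum_pos'
    · intro i _
      exact Finset.sum_nonneg fun y _ => S.b_nonneg i y
    · exact ⟨i0, Finset.mem_univ _,
        Finset.sum_pos' (fun y _ => S.b_nonneg i0 y) ⟨y0, hy0Y, hb0⟩⟩
  -- the boundary balance in radial form
  have hB0 : (∑ i, ∑ y ∈ S.Y, S.b i y • y) = (0 : EuclideanSpace ℝ (Fin d)) := by
    rw [← S.balance_bd]
    apply Finset.sum_congr rfl
    intro i _
    apply Finset.sum_congr rfl
    intro y hy
    rcases eq_or_lt_of_le (S.b_nonneg i y) with h0 | hpos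
    · rw [← h0]
      simp
    · have hxi := hA i y hpos
      have hsub : y - x i = r • y := by
        rw [hxi]
        module
      rw [hsub, norm_smul, Real.norm_eq_abs, abs_of_pos hr0, S.hY y hy, mul_one,
        smul_smul]
      congr 1
      field_simp
  -- choose a weighted median center v*
  set Dv : Fin n → ℝ := fun v => ∑ i, ∑ y ∈ S.Y, S.b i y * ((G.dist i v : ℕ) : ℝ) with hDvdef
  have hub : ∀ v ∈ R, ∑ i, ∑ y ∈ S.Y, 2 * (S.b i y * ((G.dist i v : ℕ) : ℝ))
      = 2 * Dv v := by
    intro v _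
    rw [hDvdef]
    rw [Finset.mul_sum]
    apply Finset.sum_congr rfl
    intro i _
    rw [Finset.mul_sum]
  have hvstar : ∃ v ∈ R, 2 * Dv v ≤ B * ((m : ℝ) - 1) := by
    by_contra hcon
    push_neg at hcon
    have hlt : (m : ℝ) * (B * ((m : ℝ) - 1)) < ∑ v ∈ R, 2 * Dv v := by
      have h := Finset.sum_lt_sum_of_nonempty ⟨i0, hi0R⟩
        (f := fun _ => B * ((m : ℝ) - 1)) (g := fun v => 2 * Dv v)
        (fun v hv => hcon v hv)
      rw [Finset.sum_const, hmdef] at h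
      simpa [nsmul_eq_mul] using h
    have hge : ∑ v ∈ R, 2 * Dv v ≤ (m : ℝ) * (B * ((m : ℝ) - 1)) := by
      have hswap : ∑ v ∈ R, 2 * Dv v
          = ∑ i, ∑ y ∈ S.Y, S.b i y * (2 * ∑ v ∈ R, ((G.dist i v : ℕ) : ℝ)) := by
        calc ∑ v ∈ R, 2 * Dv v
            = ∑ v ∈ R, ∑ i, ∑ y ∈ S.Y, 2 * (S.b i y * ((G.dist i v : ℕ) : ℝ)) := by
              apply Finset.sum_congr rfl
              intro v hv
              exact (hub v hv).symm
          _ = ∑ i, ∑ v ∈ R, ∑ y ∈ S.Y, 2 * (S.b i y * ((G.dist i v : ℕ) : ℝ)) :=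
              Finset.sum_comm
          _ = ∑ i, ∑ y ∈ S.Y, ∑ v ∈ R, 2 * (S.b i y * ((G.dist i v : ℕ) : ℝ)) :=
              Finset.sum_congr rfl fun i _ => Finset.sum_comm
          _ = ∑ i, ∑ y ∈ S.Y, S.b i y * (2 * ∑ v ∈ R, ((G.dist i v : ℕ) : ℝ)) := by
              apply Finset.sum_congr rfl
              intro i _
              apply Finset.sum_congr rfl
              intro y _
              rw [Finset.mul_sum, Finset.mul_sum]
              apply Finset.sum_congr rfl
              intro v _
              ring
      rw [hswap]
      have hper : ∀ i, ∀ y ∈ S.Y,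
          S.b i y * (2 * ∑ v ∈ R, ((G.dist i v : ℕ) : ℝ))
          ≤ S.b i y * ((m : ℝ) * ((m : ℝ) - 1)) := by
        intro i y _
        rcases eq_or_lt_of_le (S.b_nonneg i y) with h0 | hpos
        · rw [← h0]
          simp
        · apply mul_le_mul_of_nonneg_left _ (le_of_lt hpos)
          have hiR : i ∈ R := by
            rw [hR, Finset.mem_filter]
            exact ⟨Finset.mem_univ _, hreach i y hpos⟩
          have hds := hdistsum i hiR
          have hcast : (2 * ∑ v ∈ R, G.dist i v : ℕ) = 2 * ∑ v ∈ R, ((G.dist i v : ℕ) : ℝ) := by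
            push_cast
            ring
          have hcast2 : ((m * (m - 1) : ℕ) : ℝ) = (m : ℝ) * ((m : ℝ) - 1) := by
            push_cast [Nat.cast_sub hm1]
            ring
          calc 2 * ∑ v ∈ R, ((G.dist i v : ℕ) : ℝ)
              = ((2 * ∑ v ∈ R, G.dist i v : ℕ) : ℝ) := hcast.symm
            _ ≤ ((m * (m - 1) : ℕ) : ℝ) := by exact_mod_cast hds
            _ = (m : ℝ) * ((m : ℝ) - 1) := hcast2
      calc ∑ i, ∑ y ∈ S.Y, S.b i y * (2 * ∑ v ∈ R, ((G.dist i v : ℕ) : ℝ))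
          ≤ ∑ i, ∑ y ∈ S.Y, S.b i y * ((m : ℝ) * ((m : ℝ) - 1)) :=
            Finset.sum_le_sum fun i _ => Finset.sum_le_sum fun y hy => hper i y hy
        _ = B * ((m : ℝ) * ((m : ℝ) - 1)) := by
            rw [hBdef, Finset.sum_mul]
            apply Finset.sum_congr rfl
            intro i _
            rw [Finset.sum_mul]
        _ = (m : ℝ) * (B * ((m : ℝ) - 1)) := by ring
    linarith
  obtain ⟨vs, hvsR, hvsD⟩ := hvstar
  have hreachiv : ∀ i, i ∈ R → G.Reachable i vs := fun i hi => (hRiff i hi vs).mp hvsR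
  -- the main estimate
  have hterm : ∀ i, ∀ y ∈ S.Y,
      S.b i y * (1 - (inner ℝ (x vs) y : ℝ))
      ≤ S.b i y * (r + 2 * r * ((G.dist i vs : ℕ) : ℝ)) := by
    intro i y hy
    rcases eq_or_lt_of_le (S.b_nonneg i y) with h0 | hpos
    · rw [← h0]
      simp
    · apply mul_le_mul_of_nonneg_left _ (le_of_lt hpos)
      have h1 : 1 - (inner ℝ (x vs) y : ℝ) = (inner ℝ (y - x vs) y : ℝ) := by
        rw [inner_sub_left, real_inner_self_eq_norm_sq, S.hY y hy]
        rw [real_inner_comm]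
        norm_num
      have h2 : (inner ℝ (y - x vs) y : ℝ) ≤ ‖y - x vs‖ := by
        have h := real_inner_le_norm (y - x vs) y
        rwa [S.hY y hy, mul_one] at h
      have t1 : ‖y - x vs‖ ≤ ‖y - x i‖ + ‖x i - x vs‖ := by
        have h := dist_triangle y (x i) (x vs)
        simpa [dist_eq_norm] using h
      have t2 : ‖y - x i‖ = r := by
        rw [norm_sub_rev]
        exact (S.b_edge i y hpos).2
      have hiR : i ∈ R := by
        rw [hR, Finset.mem_filter]
        exact ⟨Finset.mem_univ _, hreach i y hpos⟩
      have t3 : ‖x i - x vs‖ ≤ 2 * r * ((G.dist i vs : ℕ) : ℝ) :=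
        hdistbound i vs (hreachiv i hiR)
      linarith
  have hz : ∑ i, ∑ y ∈ S.Y, S.b i y * (inner ℝ (x vs) y : ℝ) = 0 := by
    have h := congrArg (fun v : EuclideanSpace ℝ (Fin d) => (inner ℝ (x vs) v : ℝ)) hB0
    simp only [inner_sum, real_inner_smul_right, inner_zero_right] at h
    exact h
  have hchain : B ≤ r * B * (m : ℝ) := by
    have e1 : B = ∑ i, ∑ y ∈ S.Y, S.b i y * (1 - (inner ℝ (x vs) y : ℝ)) := by
      have e2 : ∑ i, ∑ y ∈ S.Y, S.b i y * (1 - (inner ℝ (x vs) y : ℝ))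
          = (∑ i, ∑ y ∈ S.Y, S.b i y) - ∑ i, ∑ y ∈ S.Y, S.b i y * (inner ℝ (x vs) y : ℝ) := by
        rw [← Finset.sum_sub_distrib]
        apply Finset.sum_congr rfl
        intro i _
        rw [← Finset.sum_sub_distrib]
        apply Finset.sum_congr rfl
        intro y _
        ring
      rw [e2, hz, sub_zero, hBdef]
    have e3 : ∑ i, ∑ y ∈ S.Y, S.b i y * (r + 2 * r * ((G.dist i vs : ℕ) : ℝ))
        = r * B + 2 * r * Dv vs := by
      rw [hBdef, hDvdef]
      rw [Finset.mul_sum, Finset.mul_sum, ← Finset.sum_add_distrib]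
      apply Finset.sum_congr rfl
      intro i _
      rw [Finset.mul_sum, Finset.mul_sum, ← Finset.sum_add_distrib]
      apply Finset.sum_congr rfl
      intro y _
      ring
    have e4 : B ≤ r * B + 2 * r * Dv vs := by
      calc B = ∑ i, ∑ y ∈ S.Y, S.b i y * (1 - (inner ℝ (x vs) y : ℝ)) := e1
        _ ≤ ∑ i, ∑ y ∈ S.Y, S.b i y * (r + 2 * r * ((G.dist i vs : ℕ) : ℝ)) :=
            Finset.sum_le_sum fun i _ => Finset.sum_le_sum fun y hy => hterm i y hy
        _ = r * B + 2 * r * Dv vs := e3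
    have e5 : 2 * r * Dv vs ≤ r * (B * ((m : ℝ) - 1)) := by
      have := mul_le_mul_of_nonneg_left hvsD (le_of_lt hr0)
      calc 2 * r * Dv vs = r * (2 * Dv vs) := by ring
        _ ≤ r * (B * ((m : ℝ) - 1)) := this
    calc B ≤ r * B + 2 * r * Dv vs := e4
      _ ≤ r * B + r * (B * ((m : ℝ) - 1)) := by linarith
      _ = r * B * (m : ℝ) := by ring
  have hrm : 1 ≤ r * (m : ℝ) := by
    have hB' : B * 1 ≤ B * (r * (m : ℝ)) := by
      calc B * 1 = B := by ring
        _ ≤ r * B * (m : ℝ) := hchain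
        _ = B * (r * (m : ℝ)) := by ring
    exact le_of_mul_le_mul_left hB' hBpos
  have hrn : 1 ≤ r * (n : ℝ) := by
    have hmn' : (m : ℝ) ≤ (n : ℝ) := by exact_mod_cast hmn
    nlinarith
  have hnpos : (0 : ℝ) < (n : ℝ) := by
    have : (1 : ℝ) ≤ (n : ℝ) := by exact_mod_cast hn
    linarith
  rw [div_le_iff₀ hnpos]
  linarith [hrn]
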